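/- Let n ≥ 1 and let Φ₁, Φ₂ : Matrix (Fin n) (Fin n) ℂ → Matrix (Fin n) (Fin n) ℂ be quantum channels. Then Φ₁ and Φ₂ are compatible if and only if for all Hermitian matrices A, B indexed by (Fin n × Fin n) (interpreted as output × input) such that Ã + 𝟙⊗B is positive semidefinite—where Ã and 𝟙⊗B are the matrices indexed by ((Fin n × Fin n) × Fin n) (two output factors × input) with entries Ã (((a,c),i),((b,d),j)) = A ((a,i),(b,j)) · δ_{c d} and (𝟙⊗B) (((a,c),i),((b,d),j)) = δ_{a b} · B ((c,i),(d,j))—one has Re Tr(C(Φ₁) · A) + Re Tr(C(Φ₂) · B) ≥ 0. -/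

import Mathlib

open Matrix BigOperators
open scoped ComplexOrder

noncomputable section

/-- A density matrix: positive semidefinite with trace 1. -/
def IsDensity {ι : Type*} [Fintype ι] (M : Matrix ι ι ℂ) : Prop :=
  M.PosSemidef ∧ M.trace = 1

/-- The Choi matrix of a linear map between matrix spaces, indexed by (output × input). -/
def choi {ι κ : Type*} [Fintype ι] [DecidableEq ι]
    (Φ : Matrix ι ι ℂ →ₗ[ℂ] Matrix κ κ ℂ) : Matrix (κ × ι) (κ × ι) ℂ :=
  fun p q => Φ (Matrix.single p.2 q.2 1) p.1 q.1

/-- A quantum channel: trace preserving with positive semidefinite Choi matrix. -/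
def IsQChannel {ι κ : Type*} [Fintype ι] [DecidableEq ι] [Fintype κ]
    (Φ : Matrix ι ι ℂ →ₗ[ℂ] Matrix κ κ ℂ) : Prop :=
  (∀ X, (Φ X).trace = X.trace) ∧ (choi Φ).PosSemidef

/-- The tensor product `Φ ⊗ Ψ` of maps on matrix spaces, determined by
`(Φ ⊗ Ψ)(X ⊗ₖ Y) = (Φ X) ⊗ₖ (Ψ Y)`. -/
def tmap {α β γ δ : Type*} [Fintype α] [DecidableEq α] [Fintype γ] [DecidableEq γ]
    (Φ : Matrix α α ℂ → Matrix β β ℂ) (Ψ : Matrix γ γ ℂ → Matrix δ δ ℂ)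
    (M : Matrix (α × γ) (α × γ) ℂ) : Matrix (β × δ) (β × δ) ℂ :=
  fun p q => ∑ a, ∑ a', ∑ c, ∑ c', M (a, c) (a', c') *
    (Φ (Matrix.single a a' 1) p.1 q.1 * Ψ (Matrix.single c c' 1) p.2 q.2)

/-- Partial trace over the second factor of a bipartite matrix. -/
def ptr2 {α β : Type*} [Fintype β] (M : Matrix (α × β) (α × β) ℂ) : Matrix α α ℂ :=
  fun a a' => ∑ b, M (a, b) (a', b)

/-- Partial trace over the first factor of a bipartite matrix. -/
def ptr1 {α β : Type*} [Fintype α] (M : Matrix (α × β) (α × β) ℂ) : Matrix β β ℂ :=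
  fun b b' => ∑ a, M (a, b) (a, b')

/-- Compatibility of two quantum channels: they arise as the two marginals of a single
channel into the tensor product. -/
def Compatible {n : ℕ} (Φ₁ Φ₂ : Matrix (Fin n) (Fin n) ℂ →ₗ[ℂ] Matrix (Fin n) (Fin n) ℂ) : Prop :=
  ∃ Φ : Matrix (Fin n) (Fin n) ℂ →ₗ[ℂ] Matrix (Fin n × Fin n) (Fin n × Fin n) ℂ,
    IsQChannel Φ ∧ ∀ ρ : Matrix (Fin n) (Fin n) ℂ, IsDensity ρ →
      ptr2 (Φ ρ) = Φ₁ ρ ∧ ptr1 (Φ ρ) = Φ₂ ρ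

/-- The lift `Ã` of a matrix `A` indexed by (output × input) to a matrix indexed by
((output₁ × output₂) × input), acting as `A` on the first output factor and input,
and as the identity on the second output factor. -/
def atilde {n : ℕ} (A : Matrix (Fin n × Fin n) (Fin n × Fin n) ℂ) :
    Matrix ((Fin n × Fin n) × Fin n) ((Fin n × Fin n) × Fin n) ℂ :=
  fun p q => A (p.1.1, p.2) (q.1.1, q.2) * (if p.1.2 = q.1.2 then 1 else 0)

/-- The lift `𝟙 ⊗ B` of a matrix `B` indexed by (output × input) to a matrix indexed by
((output₁ × output₂) × input), acting as the identity on the first output factor and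
as `B` on the second output factor and input. -/
def oneTensor {n : ℕ} (B : Matrix (Fin n × Fin n) (Fin n × Fin n) ℂ) :
    Matrix ((Fin n × Fin n) × Fin n) ((Fin n × Fin n) × Fin n) ℂ :=
  fun p q => (if p.1.1 = q.1.1 then 1 else 0) * B (p.1.2, p.2) (q.1.2, q.2)

set_option linter.unusedSectionVars false

open Matrix BigOperators Finset
open scoped ComplexOrder

noncomputable section

variable {ι κ : Type*} [Fintype ι] [DecidableEq ι] [Fintype κ] [DecidableEq κ]

lemma trace_mul_apply' (A B : Matrix ι ι ℂ) : (A * B).trace = ∑ p, ∑ q, A p q * B q p := by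
  simp [Matrix.trace, Matrix.diag, Matrix.mul_apply]

/-- rank-one outer product -/
def outer (v : ι → ℂ) : Matrix ι ι ℂ := fun p q => v p * star (v q)

lemma outer_posSemidef (v : ι → ℂ) : (outer v).PosSemidef := by
  refine Matrix.PosSemidef.of_dotProduct_mulVec_nonneg ?_ ?_
  · ext p q
    simp [outer, Matrix.conjTranspose_apply, mul_comm]
  · intro x
    have h : star x ⬝ᵥ (outer v) *ᵥ x
        = (∑ p, star (x p) * v p) * (∑ q, star (v q) * x q) := by
      rw [Finset.sum_mul_sum]
      simp only [dotProduct, Matrix.mulVec, outer, Pi.star_apply, Finset.mul_sum]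
      exact Finset.sum_congr rfl fun p _ => Finset.sum_congr rfl fun q _ => by ring
    have h2 : (∑ p, star (x p) * v p) = star (∑ q, star (v q) * x q) := by
      rw [star_sum]
      exact Finset.sum_congr rfl fun p _ => by simp [mul_comm]
    rw [h, h2]
    exact star_mul_self_nonneg _

lemma trace_outer_mul (x : ι → ℂ) (M : Matrix ι ι ℂ) :
    (outer x * M).trace = star x ⬝ᵥ M *ᵥ x := by
  rw [trace_mul_apply', Finset.sum_comm]
  simp only [dotProduct, Matrix.mulVec, outer, Pi.star_apply, Finset.mul_sum]
  exact Finset.sum_congr rfl fun q _ => Finset.sum_congr rfl fun p _ => by ring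

lemma trace_nonneg_of_posSemidef {M : Matrix ι ι ℂ} (hM : M.PosSemidef) : 0 ≤ M.trace := by
  have h : ∀ p, 0 ≤ M p p := fun p => by
    have := hM.dotProduct_mulVec_nonneg (Pi.single p 1)
    simpa [Matrix.mulVec_single, dotProduct, Pi.star_apply, Pi.single_apply,
      apply_ite, ite_mul] using this
  exact Finset.sum_nonneg fun p _ => h p

lemma trace_mul_nonneg {C M : Matrix ι ι ℂ} (hC : C.PosSemidef) (hM : M.PosSemidef) :
    0 ≤ (C * M).trace := by
  obtain ⟨m, v, rfl⟩ := Matrix.posSemidef_iff_eq_sum_vecMulVec.mp hC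
  rw [Finset.sum_mul, Matrix.trace_sum]
  refine Finset.sum_nonneg fun i _ => ?_
  have e : vecMulVec (v i) (star (v i)) = outer (v i) := rfl
  rw [e, trace_outer_mul]
  exact hM.dotProduct_mulVec_nonneg _

lemma realSmul_matrix (r : ℝ) (M : Matrix ι ι ℂ) : r • M = (r : ℂ) • M := by
  funext p q
  simp [Complex.real_smul]

lemma posSemidef_real_smul {C : Matrix ι ι ℂ} (hC : C.PosSemidef) {r : ℝ} (hr : 0 ≤ r) :
    (r • C).PosSemidef := by
  rw [realSmul_matrix]
  refine Matrix.PosSemidef.of_dotProduct_mulVec_nonneg ?_ ?_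
  · have : ((r:ℂ) • C)ᴴ = star (r:ℂ) • Cᴴ := Matrix.conjTranspose_smul _ _
    rw [Matrix.IsHermitian, this, Complex.star_def, Complex.conj_ofReal, hC.1]
  · intro x
    have : star x ⬝ᵥ ((r:ℂ) • C) *ᵥ x = (r:ℂ) * (star x ⬝ᵥ C *ᵥ x) := by
      rw [Matrix.smul_mulVec, dotProduct_smul, smul_eq_mul]
    rw [this]
    exact mul_nonneg (by exact_mod_cast Complex.zero_le_real.mpr hr) (hC.dotProduct_mulVec_nonneg x)

lemma hermitian_dotProduct_real {M : Matrix ι ι ℂ} (hM : M.IsHermitian) (x : ι → ℂ) :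
    star (star x ⬝ᵥ M *ᵥ x) = star x ⬝ᵥ M *ᵥ x := by
  conv_lhs => rw [star_dotProduct, star_star]
  rw [Matrix.star_mulVec, hM, ← Matrix.dotProduct_mulVec]

lemma posSemidef_of_forall {M : Matrix ι ι ℂ} (hM : M.IsHermitian)
    (h : ∀ C : Matrix ι ι ℂ, C.PosSemidef → 0 ≤ ((C * M).trace).re) : M.PosSemidef := by
  refine Matrix.PosSemidef.of_dotProduct_mulVec_nonneg hM fun x => ?_
  have him : (star x ⬝ᵥ M *ᵥ x).im = 0 := by
    have := hermitian_dotProduct_real hM x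
    rw [Complex.star_def, Complex.conj_eq_iff_im] at this
    exact this
  have hre : 0 ≤ (star x ⬝ᵥ M *ᵥ x).re := by
    have := h (outer x) (outer_posSemidef x)
    rwa [trace_outer_mul] at this
  rw [Complex.le_def]
  simp [him, hre]
end

set_option linter.unusedSectionVars false
set_option maxHeartbeats 1000000

open Matrix BigOperators Finset
open scoped ComplexOrder

noncomputable section

variable {ι κ : Type*} [Fintype ι] [DecidableEq ι] [Fintype κ] [DecidableEq κ]

/-- vector eᵢ + eⱼ -/
def vP (i j : ι) : ι → ℂ := fun p => (if i = p then 1 else 0) + (if j = p then 1 else 0)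
/-- vector eᵢ + I eⱼ -/
def vQ (i j : ι) : ι → ℂ := fun p =>
  (if i = p then 1 else 0) + Complex.I * (if j = p then 1 else 0)

lemma star_vP (i j p : ι) : star (vP i j p) = vP i j p := by
  unfold vP; split_ifs <;> simp

lemma star_vQ (i j p : ι) :
    star (vQ i j p) = (if i = p then 1 else 0) - Complex.I * (if j = p then (1:ℂ) else 0) := by
  unfold vQ; split_ifs <;> simp [Complex.star_def, sub_eq_add_neg]

lemma stdBasis_eq_outer (i : ι) : Matrix.single i i (1:ℂ) = outer (fun p => if i = p then 1 else 0) := by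
  funext a b
  by_cases hia : i = a <;> by_cases hib : i = b <;>
    simp_all [Matrix.single, outer]

lemma density_stdBasis (i : ι) : IsDensity (Matrix.single i i (1:ℂ)) := by
  constructor
  · rw [stdBasis_eq_outer]; exact outer_posSemidef _
  · simp [Matrix.trace, Matrix.diag, Matrix.single]

lemma trace_outer (v : ι → ℂ) : (outer v).trace = ∑ p, v p * star (v p) := by
  simp [Matrix.trace, Matrix.diag, outer]

lemma half_smul_eq (M : Matrix ι ι ℂ) : (1/2 : ℂ) • M = (1/2 : ℝ) • M := by
  rw [realSmul_matrix]; norm_num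

lemma density_P {i j : ι} (hij : i ≠ j) :
    IsDensity ((1/2:ℂ) • outer (vP i j)) := by
  rw [half_smul_eq]
  constructor
  · exact posSemidef_real_smul (outer_posSemidef _) (by norm_num)
  · have hv : ∀ p, vP i j p * star (vP i j p)
        = (if i = p then 1 else 0) + (if j = p then 1 else 0) := by
      intro p
      rw [star_vP]; unfold vP
      by_cases hip : i = p <;> by_cases hjp : j = p <;> simp_all
    rw [Matrix.trace_smul, trace_outer]
    simp only [hv, Finset.sum_add_distrib, Finset.sum_ite_eq, Finset.mem_univ, if_true]
    norm_num [Complex.real_smul]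

lemma density_Q {i j : ι} (hij : i ≠ j) :
    IsDensity ((1/2:ℂ) • outer (vQ i j)) := by
  rw [half_smul_eq]
  constructor
  · exact posSemidef_real_smul (outer_posSemidef _) (by norm_num)
  · have hv : ∀ p, vQ i j p * star (vQ i j p)
        = (if i = p then 1 else 0) + (if j = p then 1 else 0) := by
      intro p
      rw [star_vQ]; unfold vQ
      by_cases hip : i = p <;> by_cases hjp : j = p <;> simp_all <;> ring_nf <;>
        simp [Complex.I_sq]
    rw [Matrix.trace_smul, trace_outer]
    simp only [hv, Finset.sum_add_distrib, Finset.sum_ite_eq, Finset.mem_univ, if_true]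
    norm_num [Complex.real_smul]

lemma stdBasis_decomp {i j : ι} (hij : i ≠ j) :
    Matrix.single i j (1:ℂ)
      = ((1/2:ℂ) • outer (vP i j))
        + Complex.I • ((1/2:ℂ) • outer (vQ i j))
        + (-(1+Complex.I)/2) •
            (Matrix.single i i (1:ℂ) + Matrix.single j j (1:ℂ)) := by
  funext a b
  simp only [Matrix.add_apply, Matrix.smul_apply, outer, star_vP, star_vQ,
    Matrix.single, smul_eq_mul]
  unfold vP vQ
  by_cases hia : i = a <;> by_cases hjb : j = b <;> by_cases hja : j = a <;>
    by_cases hib : i = b <;> simp_all <;> ring_nf <;>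
    simp [Complex.ext_iff] <;> norm_num
end

set_option linter.unusedSectionVars false
set_option maxHeartbeats 1000000

open Matrix BigOperators Finset
open scoped ComplexOrder

noncomputable section

variable {ι κ : Type*} [Fintype ι] [DecidableEq ι] [Fintype κ] [DecidableEq κ]

/-- Linear maps agreeing on density matrices agree. -/
lemma linearMap_eq_of_densities {V : Type*} [AddCommGroup V] [Module ℂ V]
    {F G : Matrix ι ι ℂ →ₗ[ℂ] V} (h : ∀ ρ, IsDensity ρ → F ρ = G ρ) : F = G := by
  have hstd : ∀ i j : ι, F (Matrix.single i j 1) = G (Matrix.single i j 1) := by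
    intro i j
    by_cases hij : i = j
    · subst hij; exact h _ (density_stdBasis i)
    · have hP : F (outer (vP i j)) = G (outer (vP i j)) := by
        have h2 := h _ (density_P hij)
        rw [_root_.map_smul, _root_.map_smul] at h2
        exact smul_right_injective V (by norm_num : (1/2:ℂ) ≠ 0) h2
      have hQ : F (outer (vQ i j)) = G (outer (vQ i j)) := by
        have h2 := h _ (density_Q hij)
        rw [_root_.map_smul, _root_.map_smul] at h2
        exact smul_right_injective V (by norm_num : (1/2:ℂ) ≠ 0) h2
      rw [stdBasis_decomp hij]
      simp only [map_add, _root_.map_smul]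
      rw [hP, hQ, h _ (density_stdBasis i), h _ (density_stdBasis j)]
  apply LinearMap.ext; intro X
  have hX : X = ∑ i, ∑ j, X i j • Matrix.single i j 1 := by
    conv_lhs => rw [matrix_eq_sum_single X]
    refine Finset.sum_congr rfl fun i _ => Finset.sum_congr rfl fun j _ => ?_
    rw [smul_single, smul_eq_mul, mul_one]
  rw [hX, map_sum, map_sum]
  exact Finset.sum_congr rfl fun i _ => by
    rw [map_sum, map_sum]
    exact Finset.sum_congr rfl fun j _ => by rw [_root_.map_smul, _root_.map_smul, hstd]

lemma apply_eq_sum_choi (Φ : Matrix ι ι ℂ →ₗ[ℂ] Matrix κ κ ℂ) (X : Matrix ι ι ℂ) (p q : κ) :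
    Φ X p q = ∑ i, ∑ j, X i j * choi Φ (p, i) (q, j) := by
  have hX : X = ∑ i, ∑ j, X i j • Matrix.single i j 1 := by
    conv_lhs => rw [matrix_eq_sum_single X]
    refine Finset.sum_congr rfl fun i _ => Finset.sum_congr rfl fun j _ => ?_
    rw [smul_single, smul_eq_mul, mul_one]
  have hmap : Φ (∑ i, ∑ j, X i j • Matrix.single i j 1)
      = ∑ i, ∑ j, X i j • Φ (Matrix.single i j 1) := by
    rw [map_sum]
    exact Finset.sum_congr rfl fun i _ => by
      rw [map_sum]
      exact Finset.sum_congr rfl fun j _ => by rw [_root_.map_smul]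
  conv_lhs => rw [hX, hmap]
  simp only [Matrix.sum_apply, Matrix.smul_apply, smul_eq_mul]
  rfl

/-- The linear map with prescribed Choi matrix. -/
def ofChoi (C : Matrix (κ × ι) (κ × ι) ℂ) : Matrix ι ι ℂ →ₗ[ℂ] Matrix κ κ ℂ where
  toFun X := fun p q => ∑ i, ∑ j, X i j * C (p, i) (q, j)
  map_add' X Y := by
    funext p q
    show ∑ i, ∑ j, (X + Y) i j * C (p, i) (q, j)
      = (∑ i, ∑ j, X i j * C (p, i) (q, j)) + ∑ i, ∑ j, Y i j * C (p, i) (q, j)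
    simp [add_mul, Finset.sum_add_distrib]
  map_smul' c X := by
    funext p q
    show ∑ i, ∑ j, (c • X) i j * C (p, i) (q, j) = c * ∑ i, ∑ j, X i j * C (p, i) (q, j)
    simp [Finset.mul_sum, mul_assoc]

lemma ofChoi_apply (C : Matrix (κ × ι) (κ × ι) ℂ) (X : Matrix ι ι ℂ) (p q : κ) :
    ofChoi C X p q = ∑ i, ∑ j, X i j * C (p, i) (q, j) := rfl

lemma choi_ofChoi (C : Matrix (κ × ι) (κ × ι) ℂ) : choi (ofChoi C) = C := by
  funext p q
  obtain ⟨a, i⟩ := p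
  obtain ⟨b, j⟩ := q
  simp only [choi, ofChoi_apply]
  simp [Matrix.single, ite_and, ite_mul, Finset.sum_ite_eq]
end

set_option linter.unusedSectionVars false
set_option maxHeartbeats 1000000

open Matrix BigOperators Finset
open scoped ComplexOrder

noncomputable section

variable {ι κ α β : Type*} [Fintype ι] [DecidableEq ι] [Fintype κ] [DecidableEq κ]
  [Fintype α] [Fintype β]

/-- Marginal over the second output factor. -/
def marg1 (C : Matrix ((α × β) × ι) ((α × β) × ι) ℂ) : Matrix (α × ι) (α × ι) ℂ :=
  fun p q => ∑ c, C ((p.1, c), p.2) ((q.1, c), q.2)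

/-- Marginal over the first output factor. -/
def marg2 (C : Matrix ((α × β) × ι) ((α × β) × ι) ℂ) : Matrix (β × ι) (β × ι) ℂ :=
  fun p q => ∑ a, C ((a, p.1), p.2) ((a, q.1), q.2)

lemma trace_marg1 (C : Matrix ((α × β) × ι) ((α × β) × ι) ℂ) :
    (marg1 C).trace = C.trace := by
  simp only [Matrix.trace, Matrix.diag, marg1, Fintype.sum_prod_type]
  exact Finset.sum_congr rfl fun a _ => Finset.sum_comm

lemma marg1_hermitian {C : Matrix ((α × β) × ι) ((α × β) × ι) ℂ} (hC : C.IsHermitian) :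
    (marg1 C).IsHermitian := by
  funext p q
  simp only [Matrix.conjTranspose_apply, marg1, star_sum]
  exact Finset.sum_congr rfl fun c _ => congrFun (congrFun hC _) _

lemma marg2_hermitian {C : Matrix ((α × β) × ι) ((α × β) × ι) ℂ} (hC : C.IsHermitian) :
    (marg2 C).IsHermitian := by
  funext p q
  simp only [Matrix.conjTranspose_apply, marg2, star_sum]
  exact Finset.sum_congr rfl fun c _ => congrFun (congrFun hC _) _

lemma marg1_add (C D : Matrix ((α × β) × ι) ((α × β) × ι) ℂ) :
    marg1 (C + D) = marg1 C + marg1 D := by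
  funext p q; simp [marg1, Finset.sum_add_distrib]

lemma marg2_add (C D : Matrix ((α × β) × ι) ((α × β) × ι) ℂ) :
    marg2 (C + D) = marg2 C + marg2 D := by
  funext p q; simp [marg2, Finset.sum_add_distrib]

lemma marg1_smul (r : ℝ) (C : Matrix ((α × β) × ι) ((α × β) × ι) ℂ) :
    marg1 (r • C) = r • marg1 C := by
  funext p q; simp [marg1, Finset.smul_sum]

lemma marg2_smul (r : ℝ) (C : Matrix ((α × β) × ι) ((α × β) × ι) ℂ) :
    marg2 (r • C) = r • marg2 C := by
  funext p q; simp [marg2, Finset.smul_sum]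

lemma trace_mul_atilde {n : ℕ} (C : Matrix ((Fin n × Fin n) × Fin n) ((Fin n × Fin n) × Fin n) ℂ)
    (A : Matrix (Fin n × Fin n) (Fin n × Fin n) ℂ) :
    (C * atilde A).trace = (marg1 C * A).trace := by
  rw [trace_mul_apply', trace_mul_apply']
  simp only [atilde, marg1, Fintype.sum_prod_type, Finset.sum_mul, mul_ite, mul_one, mul_zero,
    Finset.sum_ite_irrel, Finset.sum_const_zero, Finset.sum_ite_eq, Finset.sum_ite_eq',
    Finset.mem_univ, if_true]
  refine Finset.sum_congr rfl fun a _ => ?_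
  rw [Finset.sum_comm]
  refine Finset.sum_congr rfl fun i _ => ?_
  rw [Finset.sum_comm]
  refine Finset.sum_congr rfl fun b _ => ?_
  rw [Finset.sum_comm]

lemma trace_mul_oneTensor {n : ℕ} (C : Matrix ((Fin n × Fin n) × Fin n) ((Fin n × Fin n) × Fin n) ℂ)
    (B : Matrix (Fin n × Fin n) (Fin n × Fin n) ℂ) :
    (C * oneTensor B).trace = (marg2 C * B).trace := by
  rw [trace_mul_apply', trace_mul_apply']
  simp only [oneTensor, marg2, Fintype.sum_prod_type, Finset.sum_mul, ite_mul, one_mul, zero_mul,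
    mul_ite, mul_one, mul_zero,
    Finset.sum_ite_irrel, Finset.sum_const_zero, Finset.sum_ite_eq, Finset.sum_ite_eq',
    Finset.mem_univ, if_true]
  rw [Finset.sum_comm]
  refine Finset.sum_congr rfl fun c _ => ?_
  rw [Finset.sum_comm]
  refine Finset.sum_congr rfl fun i _ => ?_
  rw [Finset.sum_comm]
  refine Finset.sum_congr rfl fun d _ => ?_
  rw [Finset.sum_comm]
end

set_option linter.unusedSectionVars false
set_option maxHeartbeats 1000000

open Matrix BigOperators Finset
open scoped ComplexOrder

noncomputable section

variable {ι κ α β : Type*} [Fintype ι] [DecidableEq ι] [Fintype κ] [DecidableEq κ]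
  [Fintype α] [Fintype β] [DecidableEq α] [DecidableEq β]

/-- Hermitian part of a matrix. -/
def hermPart (M : Matrix ι ι ℂ) : Matrix ι ι ℂ := (1/2 : ℂ) • (M + Mᴴ)

lemma hermPart_isHermitian (M : Matrix ι ι ℂ) : (hermPart M).IsHermitian := by
  unfold hermPart
  rw [Matrix.IsHermitian, Matrix.conjTranspose_smul, Matrix.conjTranspose_add,
    Matrix.conjTranspose_conjTranspose, add_comm]
  congr 1
  simp [Complex.star_def, Complex.ext_iff]

lemma trace_mul_conjTranspose_herm {X M : Matrix ι ι ℂ} (hX : X.IsHermitian) :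
    (X * Mᴴ).trace = star ((X * M).trace) := by
  have h1 : X * Mᴴ = (M * Xᴴ)ᴴ := by
    rw [Matrix.conjTranspose_mul, Matrix.conjTranspose_conjTranspose]
  rw [h1, Matrix.trace_conjTranspose, hX, Matrix.trace_mul_comm]

lemma re_trace_hermPart {X M : Matrix ι ι ℂ} (hX : X.IsHermitian) :
    ((X * hermPart M).trace).re = ((X * M).trace).re := by
  unfold hermPart
  rw [Matrix.mul_smul, Matrix.trace_smul, Matrix.mul_add, Matrix.trace_add,
    trace_mul_conjTranspose_herm hX]
  set t := (X * M).trace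
  rw [Complex.star_def, Complex.add_conj]
  simp

lemma atilde_hermitian {n : ℕ} {A : Matrix (Fin n × Fin n) (Fin n × Fin n) ℂ}
    (hA : A.IsHermitian) : (atilde A).IsHermitian := by
  funext p q
  simp only [Matrix.conjTranspose_apply, atilde, star_mul']
  have h := congrFun (congrFun hA (p.1.1, p.2)) (q.1.1, q.2)
  simp only [Matrix.conjTranspose_apply] at h
  by_cases hpq : q.1.2 = p.1.2
  · rw [if_pos hpq, if_pos hpq.symm, star_one, mul_one, mul_one, h]
  · rw [if_neg hpq, if_neg (Ne.symm hpq), star_zero, mul_zero, mul_zero]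

lemma oneTensor_hermitian {n : ℕ} {B : Matrix (Fin n × Fin n) (Fin n × Fin n) ℂ}
    (hB : B.IsHermitian) : (oneTensor B).IsHermitian := by
  funext p q
  simp only [Matrix.conjTranspose_apply, oneTensor, star_mul']
  have h := congrFun (congrFun hB (p.1.2, p.2)) (q.1.2, q.2)
  simp only [Matrix.conjTranspose_apply] at h
  by_cases hpq : q.1.1 = p.1.1
  · rw [if_pos hpq, if_pos hpq.symm, star_one, one_mul, one_mul, h]
  · rw [if_neg hpq, if_neg (Ne.symm hpq), star_zero, zero_mul, zero_mul]

lemma matrix_decomp_re_im (X : Matrix ι ι ℂ) :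
    ∑ x, ∑ y, ((X x y).re • Matrix.single x y 1
      + (X x y).im • (Complex.I • Matrix.single x y (1:ℂ))) = X := by
  funext p q
  simp only [Matrix.sum_apply, Matrix.add_apply, Matrix.smul_apply, Matrix.single,
    Matrix.of_apply, Complex.real_smul, smul_eq_mul, mul_ite, mul_one, mul_zero, ite_and,
    Finset.sum_ite_irrel, Finset.sum_const_zero, Finset.sum_ite_eq, Finset.sum_ite_eq',
    Finset.mem_univ, if_true, Finset.sum_add_distrib, Complex.re_add_im]

/-- Any ℝ-linear functional on complex matrices is represented by a matrix. -/
lemma exists_repr (g : Matrix ι ι ℂ →ₗ[ℝ] ℝ) :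
    ∃ M : Matrix ι ι ℂ, ∀ X, ((X * M).trace).re = g X := by
  refine ⟨Matrix.of fun y x => (g (Matrix.single x y 1) : ℂ)
    - Complex.I * g (Complex.I • Matrix.single x y 1), fun X => ?_⟩
  rw [trace_mul_apply']
  simp only [Complex.re_sum, Matrix.of_apply]
  have hterm : ∀ x y : ι, ((X x y * ((g (Matrix.single x y 1) : ℂ)
      - Complex.I * g (Complex.I • Matrix.single x y 1))).re)
      = g ((X x y).re • Matrix.single x y 1
          + (X x y).im • (Complex.I • Matrix.single x y 1)) := by
    intro x y
    rw [map_add, _root_.map_smul g ((X x y).re) (Matrix.single x y 1),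
      _root_.map_smul g ((X x y).im) (Complex.I • Matrix.single x y 1),
      smul_eq_mul, smul_eq_mul]
    simp only [Complex.mul_re, Complex.sub_re, Complex.sub_im, Complex.mul_im,
      Complex.ofReal_re, Complex.ofReal_im, Complex.I_re, Complex.I_im]
    ring
  simp only [hterm]
  have hsum : ∑ x, ∑ y, g ((X x y).re • Matrix.single x y 1
      + (X x y).im • (Complex.I • Matrix.single x y 1))
      = g (∑ x, ∑ y, ((X x y).re • Matrix.single x y 1
        + (X x y).im • (Complex.I • Matrix.single x y 1))) := by
    rw [map_sum]
    exact Finset.sum_congr rfl fun x _ => (map_sum g _ _).symm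
  rw [hsum, matrix_decomp_re_im]
end

set_option linter.unusedSectionVars false
set_option maxHeartbeats 1000000

open Matrix BigOperators Finset
open scoped ComplexOrder

noncomputable section

variable {ι : Type*} [Fintype ι] [DecidableEq ι]

lemma diag_nonneg_of_psd {C : Matrix ι ι ℂ} (hC : C.PosSemidef) (p : ι) : 0 ≤ C p p := by
  have := hC.dotProduct_mulVec_nonneg (Pi.single p 1)
  simpa [Matrix.mulVec_single, dotProduct, Pi.star_apply, Pi.single_apply,
    apply_ite, ite_mul] using this

lemma quad_expand (C : Matrix ι ι ℂ) (c : ℂ) (p q : ι) :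
    star (fun r => (if p = r then 1 else 0) + (if q = r then c else 0))
      ⬝ᵥ C *ᵥ (fun r => (if p = r then 1 else 0) + (if q = r then c else 0))
    = C p p + c * C p q + star c * C q p + star c * c * C q q := by
  have hsx : ∀ r : ι, star ((if p = r then (1:ℂ) else 0) + (if q = r then c else 0))
      = (if p = r then 1 else 0) + (if q = r then star c else 0) := by
    intro r
    by_cases h1 : p = r <;> by_cases h2 : q = r <;> simp [h1, h2]
  simp only [dotProduct, Matrix.mulVec, Pi.star_apply, hsx]
  simp only [mul_add, add_mul, mul_ite, ite_mul, mul_one, one_mul, mul_zero, zero_mul,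
    Finset.sum_add_distrib, Finset.sum_ite_eq, Finset.mem_univ, if_true,
    Finset.sum_const_zero]
  ring

lemma entry_norm_le_trace {C : Matrix ι ι ℂ} (hC : C.PosSemidef) (p q : ι) :
    ‖C p q‖ ≤ C.trace.re := by
  have hdiag : ∀ r, 0 ≤ (C r r).re ∧ (C r r).im = 0 := by
    intro r
    have := diag_nonneg_of_psd hC r
    rw [Complex.le_def] at this
    exact ⟨this.1, this.2.symm⟩
  have htr : C.trace.re = ∑ r, (C r r).re := by
    simp [Matrix.trace, Matrix.diag, Complex.re_sum]
  have hdle : ∀ r, (C r r).re ≤ C.trace.re := by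
    intro r
    rw [htr]
    exact Finset.single_le_sum (fun r _ => (hdiag r).1) (Finset.mem_univ r)
  by_cases hpq : p = q
  · subst hpq
    have : ‖C p p‖ = (C p p).re := by
      have e : C p p = ((C p p).re : ℂ) := Complex.ext (by simp) (by simp [(hdiag p).2])
      rw [e]; simp [abs_of_nonneg (hdiag p).1]
    rw [this]; exact hdle p
  · have hqp : C q p = star (C p q) := by
      have := congrFun (congrFun hC.1 q) p
      simp only [Matrix.conjTranspose_apply] at this
      exact this.symm
    set w := C p q with hw
    set a := (C p p).re
    set b := (C q q).re
    have hform : ∀ c : ℂ, 0 ≤ (C p p + c * w + star c * C q p + star c * c * C q q).re := by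
      intro c
      have h0 := hC.dotProduct_mulVec_nonneg (fun r => (if p = r then 1 else 0) + (if q = r then c else 0))
      rw [quad_expand] at h0
      rw [Complex.le_def] at h0
      simpa using h0.1
    have h1 := hform 1
    have h2 := hform (-1)
    have h3 := hform Complex.I
    have h4 := hform (-Complex.I)
    rw [hqp] at h1 h2 h3 h4
    simp only [Complex.add_re, Complex.mul_re, Complex.one_re, Complex.one_im,
      Complex.neg_re, Complex.neg_im, Complex.I_re, Complex.I_im, star_one,
      Complex.star_def, Complex.conj_re, Complex.conj_im, map_neg, Complex.conj_I,
      Complex.I_mul_I,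
      one_mul, zero_mul, mul_zero, mul_one, neg_neg, neg_zero, zero_sub, sub_zero,
      zero_add, add_zero, mul_neg, neg_mul] at h1 h2 h3 h4
    have hre : |w.re| ≤ (a + b) / 2 := by
      rw [abs_le]; constructor <;> nlinarith [h1, h2]
    have him : |w.im| ≤ (a + b) / 2 := by
      rw [abs_le]; constructor <;> nlinarith [h3, h4]
    have habs : ‖w‖ ≤ |w.re| + |w.im| := Complex.norm_le_abs_re_add_abs_im w
    have hab : a + b ≤ C.trace.re := by
      rw [htr]
      have hsub : ({p, q} : Finset ι) ⊆ Finset.univ := Finset.subset_univ _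
      have := Finset.sum_le_sum_of_subset_of_nonneg hsub
        (fun r _ _ => (hdiag r).1)
      rwa [Finset.sum_pair hpq] at this
    linarith
end

set_option linter.unusedSectionVars false
set_option maxHeartbeats 1000000

open Matrix BigOperators Finset Bornology
open scoped ComplexOrder Topology

noncomputable section

attribute [local instance 10000] Matrix.normedAddCommGroup Matrix.normedSpace

instance (priority := 10000) matFD {m k : Type*} [Fintype m] [Fintype k] :
    FiniteDimensional ℝ (Matrix m k ℂ) :=
  inferInstanceAs (FiniteDimensional ℝ (m → k → ℂ))

instance (priority := 10000) matFC {m k : Type*} [Fintype m] [Fintype k] :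
    FirstCountableTopology (Matrix m k ℂ) :=
  inferInstanceAs (FirstCountableTopology (m → k → ℂ))

instance (priority := 10000) matLCS {m k : Type*} [Fintype m] [Fintype k] :
    LocallyConvexSpace ℝ (Matrix m k ℂ) :=
  inferInstanceAs (LocallyConvexSpace ℝ (m → k → ℂ))

variable {ι α β : Type*} [Fintype ι] [DecidableEq ι] [Fintype α] [Fintype β]
  [DecidableEq α] [DecidableEq β]

/-- entry evaluation as an ℝ-linear map -/
def entryL {m k : Type*} [Fintype m] [Fintype k] (p : m) (q : k) :
    Matrix m k ℂ →ₗ[ℝ] ℂ where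
  toFun M := M p q
  map_add' _ _ := rfl
  map_smul' _ _ := rfl

/-- real part of trace as an ℝ-linear map -/
def traceReL {m : Type*} [Fintype m] : Matrix m m ℂ →ₗ[ℝ] ℝ where
  toFun M := M.trace.re
  map_add' M N := by simp [Matrix.trace_add]
  map_smul' r M := by simp [Matrix.trace_smul]

/-- quadratic form evaluation as an ℝ-linear map in the matrix argument -/
def qfL {m : Type*} [Fintype m] (x : m → ℂ) : Matrix m m ℂ →ₗ[ℝ] ℂ where
  toFun M := star x ⬝ᵥ M *ᵥ x
  map_add' M N := by
    simp [Matrix.add_mulVec, dotProduct_add]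
  map_smul' r M := by
    simp only [RingHom.id_apply]
    have : (r • M) *ᵥ x = r • (M *ᵥ x) := by
      funext p
      simp [Matrix.mulVec, dotProduct, Finset.smul_sum, smul_mul_assoc, mul_assoc]
    rw [this, dotProduct_smul]

def marg1L : Matrix ((α × β) × ι) ((α × β) × ι) ℂ →ₗ[ℝ] Matrix (α × ι) (α × ι) ℂ where
  toFun := marg1
  map_add' := marg1_add
  map_smul' := marg1_smul

def marg2L : Matrix ((α × β) × ι) ((α × β) × ι) ℂ →ₗ[ℝ] Matrix (β × ι) (β × ι) ℂ where
  toFun := marg2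
  map_add' := marg2_add
  map_smul' := marg2_smul

/-- The set of marginal pairs of positive semidefinite matrices. -/
def SetS (ι α β : Type*) [Fintype ι] [Fintype α] [Fintype β] :
    Set (Matrix (α × ι) (α × ι) ℂ × Matrix (β × ι) (β × ι) ℂ) :=
  {x | ∃ C : Matrix ((α × β) × ι) ((α × β) × ι) ℂ,
    C.PosSemidef ∧ marg1 C = x.1 ∧ marg2 C = x.2}

lemma marg1_zero : marg1 (0 : Matrix ((α × β) × ι) ((α × β) × ι) ℂ) = 0 := by
  funext p q; simp [marg1]

lemma marg2_zero : marg2 (0 : Matrix ((α × β) × ι) ((α × β) × ι) ℂ) = 0 := by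
  funext p q; simp [marg2]

lemma SetS_zero : (0, 0) ∈ SetS ι α β :=
  ⟨0, Matrix.PosSemidef.zero, marg1_zero, marg2_zero⟩

lemma SetS_smul {x} (hx : x ∈ SetS ι α β) {t : ℝ} (ht : 0 ≤ t) : t • x ∈ SetS ι α β := by
  obtain ⟨C, hC, h1, h2⟩ := hx
  exact ⟨t • C, posSemidef_real_smul hC ht,
    by rw [marg1_smul, h1]; rfl, by rw [marg2_smul, h2]; rfl⟩

lemma SetS_convex : Convex ℝ (SetS ι α β) := by
  rintro x ⟨C, hC, hC1, hC2⟩ y ⟨D, hD, hD1, hD2⟩ a b ha hb hab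
  refine ⟨a • C + b • D, (posSemidef_real_smul hC ha).add (posSemidef_real_smul hD hb), ?_, ?_⟩
  · rw [marg1_add, marg1_smul, marg1_smul, hC1, hD1]; rfl
  · rw [marg2_add, marg2_smul, marg2_smul, hC2, hD2]; rfl

lemma isClosed_nonneg_complex : IsClosed {z : ℂ | 0 ≤ z} := by
  have h : {z : ℂ | 0 ≤ z} = Complex.re ⁻¹' (Set.Ici 0) ∩ Complex.im ⁻¹' {0} := by
    ext z
    simp [Complex.le_def, eq_comm]
  rw [h]
  exact (isClosed_Ici.preimage Complex.continuous_re).inter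
    (isClosed_singleton.preimage Complex.continuous_im)

lemma SetS_closed : IsClosed (SetS ι α β) := by
  refine IsSeqClosed.isClosed ?_
  intro x p hxS hxp
  choose Cf hCpsd hC1 hC2 using hxS
  have htr : ∀ k, (Cf k).trace.re = ((x k).1.trace).re := fun k => by
    rw [← hC1 k, trace_marg1]
  have hcont1 : Continuous (fun M : Matrix (α × ι) (α × ι) ℂ => (M.trace).re) :=
    (traceReL).continuous_of_finiteDimensional
  have htend : Filter.Tendsto (fun k => ((x k).1.trace).re) Filter.atTop (𝓝 ((p.1.trace).re)) :=
    ((hcont1.tendsto p.1).comp ((continuous_fst.tendsto p).comp hxp))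
  obtain ⟨R, hR⟩ := htend.bddAbove_range
  rw [mem_upperBounds] at hR
  have hRk : ∀ k p' q', ‖Cf k p' q'‖ ≤ R := fun k p' q' =>
    le_trans (entry_norm_le_trace (hCpsd k) p' q')
      (by rw [htr k]; exact hR _ ⟨k, rfl⟩)
  have hmem : ∀ k, Cf k ∈ Metric.closedBall (0 : Matrix ((α × β) × ι) ((α × β) × ι) ℂ)
      (max R 0) := fun k => by
    rw [mem_closedBall_zero_iff]
    exact (Matrix.norm_le_iff (le_max_right R 0)).2 fun i j =>
      le_trans (hRk k i j) (le_max_left _ _)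
  obtain ⟨C, -, φ, hφ, hCtend⟩ :=
    tendsto_subseq_of_bounded Metric.isBounded_closedBall hmem
  have hentry : ∀ p' q', Filter.Tendsto (fun k => Cf (φ k) p' q') Filter.atTop (𝓝 (C p' q')) :=
    fun p' q' =>
      (((entryL p' q').continuous_of_finiteDimensional).tendsto C).comp hCtend
  have hherm : C.IsHermitian := by
    funext p' q'
    have e1 : Filter.Tendsto (fun k => star (Cf (φ k) q' p')) Filter.atTop
        (𝓝 (star (C q' p'))) := (continuous_star.tendsto _).comp (hentry q' p')
    have e2 : (fun k => star (Cf (φ k) q' p')) = fun k => Cf (φ k) p' q' := by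
      funext k
      have := congrFun (congrFun (hCpsd (φ k)).1 p') q'
      simpa [Matrix.conjTranspose_apply] using this
    rw [e2] at e1
    have := tendsto_nhds_unique e1 (hentry p' q')
    simpa [Matrix.conjTranspose_apply] using this
  have hpsd : C.PosSemidef := by
    refine Matrix.PosSemidef.of_dotProduct_mulVec_nonneg hherm fun v => ?_
    have e1 : Filter.Tendsto (fun k => star v ⬝ᵥ (Cf (φ k)) *ᵥ v) Filter.atTop
        (𝓝 (star v ⬝ᵥ C *ᵥ v)) :=
      (((qfL v).continuous_of_finiteDimensional).tendsto C).comp hCtend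
    exact isClosed_nonneg_complex.mem_of_tendsto e1
      (Filter.Eventually.of_forall fun k => (hCpsd (φ k)).dotProduct_mulVec_nonneg v)
  refine ⟨C, hpsd, ?_, ?_⟩
  · have e1 : Filter.Tendsto (fun k => marg1 (Cf (φ k))) Filter.atTop (𝓝 (marg1 C)) :=
      (((marg1L (α := α) (β := β) (ι := ι)).continuous_of_finiteDimensional).tendsto C).comp
        hCtend
    have e2 : (fun k => marg1 (Cf (φ k))) = fun k => (x (φ k)).1 := funext fun k => hC1 (φ k)
    rw [e2] at e1
    have e3 : Filter.Tendsto (fun k => (x (φ k)).1) Filter.atTop (𝓝 p.1) :=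
      ((continuous_fst.tendsto p).comp (hxp.comp hφ.tendsto_atTop))
    exact tendsto_nhds_unique e1 e3
  · have e1 : Filter.Tendsto (fun k => marg2 (Cf (φ k))) Filter.atTop (𝓝 (marg2 C)) :=
      (((marg2L (α := α) (β := β) (ι := ι)).continuous_of_finiteDimensional).tendsto C).comp
        hCtend
    have e2 : (fun k => marg2 (Cf (φ k))) = fun k => (x (φ k)).2 := funext fun k => hC2 (φ k)
    rw [e2] at e1
    have e3 : Filter.Tendsto (fun k => (x (φ k)).2) Filter.atTop (𝓝 p.2) :=
      ((continuous_snd.tendsto p).comp (hxp.comp hφ.tendsto_atTop))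
    exact tendsto_nhds_unique e1 e3
end

set_option linter.unusedSectionVars false
set_option maxHeartbeats 1000000

open Matrix BigOperators Finset
open scoped ComplexOrder Topology

noncomputable section

attribute [local instance 10000] Matrix.normedAddCommGroup Matrix.normedSpace

variable {ι α β : Type*} [Fintype ι] [DecidableEq ι] [Fintype α] [Fintype β]
  [DecidableEq α] [DecidableEq β]

lemma exists_separating
    {x : Matrix (α × ι) (α × ι) ℂ × Matrix (β × ι) (β × ι) ℂ}
    (hx : x ∉ SetS ι α β) (hx1 : x.1.IsHermitian) (hx2 : x.2.IsHermitian) :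
    ∃ (A : Matrix (α × ι) (α × ι) ℂ) (B : Matrix (β × ι) (β × ι) ℂ),
      A.IsHermitian ∧ B.IsHermitian ∧
      (∀ C : Matrix ((α × β) × ι) ((α × β) × ι) ℂ, C.PosSemidef →
        0 ≤ ((marg1 C * A).trace).re + ((marg2 C * B).trace).re) ∧
      ((x.1 * A).trace).re + ((x.2 * B).trace).re < 0 := by
  obtain ⟨f, u, hfa, hfx⟩ :=
    geometric_hahn_banach_closed_point (SetS_convex) (SetS_closed) hx
  have hu0 : 0 < u := by
    have h0 := hfa _ (SetS_zero)
    rwa [show ((0, 0) : Matrix (α × ι) (α × ι) ℂ × Matrix (β × ι) (β × ι) ℂ) = 0 from rfl,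
      map_zero] at h0
  have hfle : ∀ a ∈ SetS ι α β, f a ≤ 0 := by
    intro a ha
    by_contra hpos
    push_neg at hpos
    have hmem := SetS_smul ha (t := u / f a + 1)
      (le_of_lt (add_pos (div_pos hu0 hpos) one_pos))
    have h2 := hfa _ hmem
    rw [_root_.map_smul, smul_eq_mul] at h2
    rw [add_mul, div_mul_cancel₀ _ (ne_of_gt hpos), one_mul] at h2
    linarith
  set g₁ := f.comp (ContinuousLinearMap.inl ℝ (Matrix (α × ι) (α × ι) ℂ)
    (Matrix (β × ι) (β × ι) ℂ)) with hg₁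
  set g₂ := f.comp (ContinuousLinearMap.inr ℝ (Matrix (α × ι) (α × ι) ℂ)
    (Matrix (β × ι) (β × ι) ℂ)) with hg₂
  have hf_eq : ∀ X Y, f (X, Y) = g₁ X + g₂ Y := by
    intro X Y
    have : (X, Y) = (X, (0:Matrix (β × ι) (β × ι) ℂ))
        + ((0:Matrix (α × ι) (α × ι) ℂ), Y) := by
      simp
    rw [this, map_add]
    rfl
  obtain ⟨M₁, hM₁⟩ := exists_repr (g₁ : Matrix (α × ι) (α × ι) ℂ →ₗ[ℝ] ℝ)
  obtain ⟨M₂, hM₂⟩ := exists_repr (g₂ : Matrix (β × ι) (β × ι) ℂ →ₗ[ℝ] ℝ)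
  have key₁ : ∀ X : Matrix (α × ι) (α × ι) ℂ, X.IsHermitian →
      ((X * hermPart (-M₁)).trace).re = - g₁ X := by
    intro X hX
    rw [re_trace_hermPart hX, Matrix.mul_neg, Matrix.trace_neg, Complex.neg_re, hM₁]
    rfl
  have key₂ : ∀ X : Matrix (β × ι) (β × ι) ℂ, X.IsHermitian →
      ((X * hermPart (-M₂)).trace).re = - g₂ X := by
    intro X hX
    rw [re_trace_hermPart hX, Matrix.mul_neg, Matrix.trace_neg, Complex.neg_re, hM₂]
    rfl
  refine ⟨hermPart (-M₁), hermPart (-M₂), hermPart_isHermitian _, hermPart_isHermitian _,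
    ?_, ?_⟩
  · intro C hC
    rw [key₁ _ (marg1_hermitian hC.1), key₂ _ (marg2_hermitian hC.1)]
    have hmem : (marg1 C, marg2 C) ∈ SetS ι α β := ⟨C, hC, rfl, rfl⟩
    have := hfle _ hmem
    rw [hf_eq] at this
    linarith
  · rw [key₁ _ hx1, key₂ _ hx2]
    have hfx' : f x = g₁ x.1 + g₂ x.2 := by rw [← hf_eq]
    linarith [hfx, hfx'.symm.le]
end

set_option linter.unusedSectionVars false
set_option maxHeartbeats 1000000

open Matrix BigOperators Finset
open scoped ComplexOrder

noncomputable section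

variable {ι κ α β : Type*} [Fintype ι] [DecidableEq ι] [Fintype κ] [DecidableEq κ]
  [Fintype α] [Fintype β] [DecidableEq α] [DecidableEq β]

def ptr2L : Matrix (α × β) (α × β) ℂ →ₗ[ℂ] Matrix α α ℂ where
  toFun := ptr2
  map_add' M N := by funext a b; simp [ptr2, Finset.sum_add_distrib]
  map_smul' c M := by funext a b; simp [ptr2, Finset.mul_sum]

def ptr1L : Matrix (α × β) (α × β) ℂ →ₗ[ℂ] Matrix β β ℂ where
  toFun := ptr1
  map_add' M N := by funext a b; simp [ptr1, Finset.sum_add_distrib]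
  map_smul' c M := by funext a b; simp [ptr1, Finset.mul_sum]

lemma trace_stdBasisMatrix (i j : ι) :
    (Matrix.single i j (1:ℂ)).trace = if i = j then 1 else 0 := by
  by_cases hij : i = j
  · subst hij; simp [Matrix.trace, Matrix.diag, Matrix.single]
  · simp only [Matrix.trace, Matrix.diag, Matrix.single, Matrix.of_apply, hij,
      if_false]
    rw [Finset.sum_eq_zero]
    intro d _
    rw [if_neg]
    rintro ⟨h1, h2⟩
    exact hij (h1.trans h2.symm)

theorem compatible_iff_dual' {n : ℕ}
    (Φ₁ Φ₂ : Matrix (Fin n) (Fin n) ℂ →ₗ[ℂ] Matrix (Fin n) (Fin n) ℂ)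
    (hΦ₁ : IsQChannel Φ₁) (hΦ₂ : IsQChannel Φ₂) :
    Compatible Φ₁ Φ₂ ↔
      ∀ A B : Matrix (Fin n × Fin n) (Fin n × Fin n) ℂ,
        A.IsHermitian → B.IsHermitian → (atilde A + oneTensor B).PosSemidef →
          0 ≤ ((choi Φ₁ * A).trace.re + (choi Φ₂ * B).trace.re) := by
  constructor
  · rintro ⟨Φ, hΦQC, hmarg⟩ A B hA hB hPSD
    have hcomp1 : ptr2L.comp Φ = Φ₁ :=
      linearMap_eq_of_densities (fun ρ hρ => (hmarg ρ hρ).1)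
    have hcomp2 : ptr1L.comp Φ = Φ₂ :=
      linearMap_eq_of_densities (fun ρ hρ => (hmarg ρ hρ).2)
    have hm1 : marg1 (choi Φ) = choi Φ₁ := by
      funext p q
      have h := LinearMap.congr_fun hcomp1 (Matrix.single p.2 q.2 1)
      calc marg1 (choi Φ) p q = ptr2 (Φ (Matrix.single p.2 q.2 1)) p.1 q.1 := rfl
        _ = Φ₁ (Matrix.single p.2 q.2 1) p.1 q.1 := by
            rw [show ptr2 (Φ (Matrix.single p.2 q.2 1))
              = Φ₁ (Matrix.single p.2 q.2 1) from h]
        _ = choi Φ₁ p q := rfl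
    have hm2 : marg2 (choi Φ) = choi Φ₂ := by
      funext p q
      have h := LinearMap.congr_fun hcomp2 (Matrix.single p.2 q.2 1)
      calc marg2 (choi Φ) p q = ptr1 (Φ (Matrix.single p.2 q.2 1)) p.1 q.1 := rfl
        _ = Φ₂ (Matrix.single p.2 q.2 1) p.1 q.1 := by
            rw [show ptr1 (Φ (Matrix.single p.2 q.2 1))
              = Φ₂ (Matrix.single p.2 q.2 1) from h]
        _ = choi Φ₂ p q := rfl
    have hpos := trace_mul_nonneg hΦQC.2 hPSD
    rw [Matrix.mul_add, Matrix.trace_add, trace_mul_atilde, trace_mul_oneTensor,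
      hm1, hm2] at hpos
    rw [Complex.le_def] at hpos
    simpa using hpos.1
  · intro h
    by_cases hmem : (choi Φ₁, choi Φ₂) ∈ SetS (Fin n) (Fin n) (Fin n)
    · obtain ⟨C, hC, h1, h2⟩ := hmem
      simp only at h1 h2
      refine ⟨ofChoi C, ⟨?_, ?_⟩, ?_⟩
      · -- trace preserving
        intro X
        have hkey : ∀ i j : Fin n, (∑ p : Fin n × Fin n, C (p, i) (p, j))
            = if i = j then 1 else 0 := by
          intro i j
          have e1 : ∑ p : Fin n × Fin n, C (p, i) (p, j)
              = ∑ a : Fin n, marg1 C ((a : Fin n), i) (a, j) := by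
            rw [Fintype.sum_prod_type]
            rfl
          rw [e1, h1]
          have e2 : ∑ a : Fin n, choi Φ₁ (a, i) (a, j)
              = (Φ₁ (Matrix.single i j 1)).trace := rfl
          rw [e2, hΦ₁.1, trace_stdBasisMatrix]
        show (ofChoi C X).trace = X.trace
        have : (ofChoi C X).trace = ∑ i, ∑ j, X i j * (∑ p : Fin n × Fin n, C (p, i) (p, j)) := by
          simp only [Matrix.trace, Matrix.diag, ofChoi_apply,
            Finset.mul_sum]
          rw [Finset.sum_comm]
          refine Finset.sum_congr rfl fun i _ => ?_
          rw [Finset.sum_comm]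
        rw [this]
        simp only [hkey, mul_ite, mul_one, mul_zero, Finset.sum_ite_eq, Finset.mem_univ,
          if_true]
        rfl
      · rw [choi_ofChoi]; exact hC
      · intro ρ _
        constructor
        · funext a b
          show ∑ c, (ofChoi C ρ) (a, c) (b, c) = Φ₁ ρ a b
          rw [apply_eq_sum_choi Φ₁ ρ a b, ← h1]
          simp only [ofChoi_apply, marg1]
          rw [Finset.sum_comm]
          refine Finset.sum_congr rfl fun i _ => ?_
          rw [Finset.sum_comm]
          refine Finset.sum_congr rfl fun j _ => ?_
          rw [Finset.mul_sum]
        · funext a b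
          show ∑ c, (ofChoi C ρ) (c, a) (c, b) = Φ₂ ρ a b
          rw [apply_eq_sum_choi Φ₂ ρ a b, ← h2]
          simp only [ofChoi_apply, marg2]
          rw [Finset.sum_comm]
          refine Finset.sum_congr rfl fun i _ => ?_
          rw [Finset.sum_comm]
          refine Finset.sum_congr rfl fun j _ => ?_
          rw [Finset.mul_sum]
    · exfalso
      obtain ⟨A, B, hA, hB, hCineq, hlt⟩ :=
        exists_separating hmem hΦ₁.2.1 hΦ₂.2.1
      have hPSD : (atilde A + oneTensor B).PosSemidef := by
        refine posSemidef_of_forall ((atilde_hermitian hA).add (oneTensor_hermitian hB)) ?_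
        intro C hC
        rw [Matrix.mul_add, Matrix.trace_add]
        have := hCineq C hC
        simpa [trace_mul_atilde, trace_mul_oneTensor] using this
      have := h A B hA hB hPSD
      simp only at hlt
      linarith
end

/-- two quantum channels are compatible iff for all Hermitian `A`, `B` with
`Ã + 𝟙⊗B` positive semidefinite, `Re Tr(C(Φ₁)A) + Re Tr(C(Φ₂)B) ≥ 0`. -/
theorem compatible_iff_dual {n : ℕ} (hn : 1 ≤ n)
    (Φ₁ Φ₂ : Matrix (Fin n) (Fin n) ℂ →ₗ[ℂ] Matrix (Fin n) (Fin n) ℂ)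
    (hΦ₁ : IsQChannel Φ₁) (hΦ₂ : IsQChannel Φ₂) :
    Compatible Φ₁ Φ₂ ↔
      ∀ A B : Matrix (Fin n × Fin n) (Fin n × Fin n) ℂ,
        A.IsHermitian → B.IsHermitian → (atilde A + oneTensor B).PosSemidef →
          0 ≤ ((choi Φ₁ * A).trace.re + (choi Φ₂ * B).trace.re) :=
  compatible_iff_dual' Φ₁ Φ₂ hΦ₁ hΦ₂

end
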